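/- Let I ≥ 2. For each i = 1,…,I let f_i : (0,1] → ℝ be differentiable and strictly increasing with f_i(1) finite, lim_{q→0⁺} f_i(q) = −∞, and f_i integrable near 0 (so that A_i(p) = ∫₀^p f_i(s) ds is finite for all p ∈ [0,1]). Define the penalty α(q) = Σ_{i=1}^I A_i(q_i) for q in the probability simplex Θ_I, and define ρ(x) = sup_{q ∈ Θ_I} { −qᵀx − α(q) } for x ∈ ℝ^I. Then ρ(x) is finite for every x ∈ ℝ^I, and the supremum is attained at a unique point q* ∈ Θ_I, which moreover satisfies 0 < q*_i < 1 for every i. -/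

import Mathlib

/-- The probability simplex in `ℝ^I`. -/
def simplex (I : ℕ) : Set (Fin I → ℝ) := {q | (∀ i, 0 ≤ q i) ∧ ∑ i, q i = 1}

/-- `penaltyA f p = ∫₀^p f(s) ds`. -/
noncomputable def penaltyA (f : ℝ → ℝ) (p : ℝ) : ℝ := ∫ s in (0 : ℝ)..p, f s

open MeasureTheory Set intervalIntegral

lemma penaltyA_contOn (f : ℝ → ℝ)
    (hint : ∀ p ∈ Set.Icc (0 : ℝ) 1, IntervalIntegrable f volume 0 p) :
    ContinuousOn (penaltyA f) (Set.Icc 0 1) := by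
  have h := intervalIntegral.continuousOn_primitive_interval' (μ := volume)
    (hint 1 (by norm_num)) (left_mem_uIcc (a := (0:ℝ)) (b := 1))
  show ContinuousOn (fun b => ∫ s in (0:ℝ)..b, f s) _
  simpa [penaltyA, Set.uIcc_of_le (zero_le_one (α := ℝ))] using h

lemma penaltyA_le (f : ℝ → ℝ) (hmono : StrictMonoOn f (Set.Ioc (0 : ℝ) 1))
    (hint : ∀ p ∈ Set.Icc (0 : ℝ) 1, IntervalIntegrable f volume 0 p)
    {t : ℝ} (ht : 0 < t) (ht1 : t ≤ 1) : penaltyA f t ≤ t * f t := by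
  have key : (∫ s in (0:ℝ)..t, f s) ≤ ∫ _s in (0:ℝ)..t, f t := by
    apply intervalIntegral.integral_mono_ae_restrict ht.le (hint t ⟨ht.le, ht1⟩)
      intervalIntegrable_const
    have h0 : ∀ᵐ s ∂(volume.restrict (Set.Icc (0:ℝ) t)), s ≠ 0 := by
      refine ae_restrict_of_ae ?_
      have : volume ({(0:ℝ)} : Set ℝ) = 0 := measure_singleton 0
      rw [MeasureTheory.ae_iff]
      convert this using 2
      ext s; simp
    filter_upwards [h0, ae_restrict_mem measurableSet_Icc] with s hs hmem
    rcases eq_or_lt_of_le hmem.2 with h | h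
    · exact le_of_eq (by rw [h])
    · exact le_of_lt (hmono ⟨lt_of_le_of_ne hmem.1 (Ne.symm hs), hmem.2.trans ht1⟩ ⟨ht, ht1⟩ h)
  simpa [penaltyA, mul_comm] using key

lemma integral_ge_const (f : ℝ → ℝ) (hmono : StrictMonoOn f (Set.Ioc (0 : ℝ) 1))
    (hint : ∀ p ∈ Set.Icc (0 : ℝ) 1, IntervalIntegrable f volume 0 p)
    {a b m : ℝ} (hm : 0 < m) (hma : m ≤ a) (hab : a ≤ b) (hb1 : b ≤ 1) :
    (b - a) * f m ≤ ∫ s in a..b, f s := by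
  have hib : IntervalIntegrable f volume a b := by
    apply (hint b ⟨(hm.trans_le (hma.trans hab)).le, hb1⟩).mono_set
    rw [Set.uIcc_of_le hab, Set.uIcc_of_le (hm.trans_le (hma.trans hab)).le]
    exact Set.Icc_subset_Icc (hm.trans_le hma).le le_rfl
  have key : (∫ _s in a..b, f m) ≤ ∫ s in a..b, f s := by
    apply intervalIntegral.integral_mono_on hab intervalIntegrable_const hib
    intro s hs
    rcases eq_or_lt_of_le (hma.trans hs.1) with h | h
    · exact le_of_eq (by rw [h])
    · exact le_of_lt (hmono ⟨hm, (hma.trans hab).trans hb1⟩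
        ⟨hm.trans_le (hma.trans hs.1), hs.2.trans hb1⟩ h)
  simpa [mul_comm] using key

lemma penaltyA_strictConvexOn (f : ℝ → ℝ)
    (hdiff : DifferentiableOn ℝ f (Set.Ioc (0 : ℝ) 1))
    (hmono : StrictMonoOn f (Set.Ioc (0 : ℝ) 1))
    (hint : ∀ p ∈ Set.Icc (0 : ℝ) 1, IntervalIntegrable f volume 0 p) :
    StrictConvexOn ℝ (Set.Icc (0:ℝ) 1) (penaltyA f) := by
  apply StrictMonoOn.strictConvexOn_of_deriv (convex_Icc 0 1) (penaltyA_contOn f hint)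
  rw [interior_Icc]
  have hco : ContinuousOn f (Set.Ioo (0:ℝ) 1) :=
    hdiff.continuousOn.mono Set.Ioo_subset_Ioc_self
  have hderiv : ∀ p ∈ Set.Ioo (0:ℝ) 1, deriv (penaltyA f) p = f p := by
    intro p hp
    have hca : ContinuousAt f p := hco.continuousAt (isOpen_Ioo.mem_nhds hp)
    have hms : StronglyMeasurableAtFilter f (nhds p) volume :=
      hco.stronglyMeasurableAtFilter isOpen_Ioo p hp
    exact (intervalIntegral.integral_hasDerivAt_right
      (hint p ⟨hp.1.le, hp.2.le⟩) hms hca).deriv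
  intro a ha b hb hab
  rw [hderiv a ha, hderiv b hb]
  exact hmono (Set.Ioo_subset_Ioc_self ha) (Set.Ioo_subset_Ioc_self hb) hab

lemma penaltyA_zero (f : ℝ → ℝ) : penaltyA f 0 = 0 := intervalIntegral.integral_same

/-- The risk measure with separable penalty `α(q) = Σᵢ ∫₀^{qᵢ} fᵢ` is
finite everywhere and its defining supremum is attained at a unique interior point
of the simplex. -/
theorem stmt_8 (I : ℕ) (hI : 2 ≤ I) (f : Fin I → ℝ → ℝ)
    (hdiff : ∀ i, DifferentiableOn ℝ (f i) (Set.Ioc (0 : ℝ) 1))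
    (hmono : ∀ i, StrictMonoOn (f i) (Set.Ioc (0 : ℝ) 1))
    (hlim : ∀ i, Filter.Tendsto (f i) (nhdsWithin 0 (Set.Ioi 0)) Filter.atBot)
    (hint : ∀ i, ∀ p ∈ Set.Icc (0 : ℝ) 1, IntervalIntegrable (f i) MeasureTheory.volume 0 p) :
    ∀ x : Fin I → ℝ, ∃ qstar ∈ simplex I,
      (∀ i, 0 < qstar i ∧ qstar i < 1) ∧
      IsGreatest {v : ℝ | ∃ q ∈ simplex I, v = -(∑ i, q i * x i) - ∑ i, penaltyA (f i) (q i)}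
        (-(∑ i, qstar i * x i) - ∑ i, penaltyA (f i) (qstar i)) ∧
      (∀ q ∈ simplex I,
        -(∑ i, q i * x i) - ∑ i, penaltyA (f i) (q i) =
          -(∑ i, qstar i * x i) - ∑ i, penaltyA (f i) (qstar i) → q = qstar) := by
  intro x
  classical
  set G : (Fin I → ℝ) → ℝ :=
    fun q => -(∑ i, q i * x i) - ∑ i, penaltyA (f i) (q i) with hGdef
  have hIpos : 0 < I := by omega
  -- coordinates of simplex points lie in [0,1]
  have hcoord : ∀ q ∈ simplex I, ∀ i, q i ∈ Set.Icc (0:ℝ) 1 := by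
    rintro q ⟨hq0, hq1⟩ i
    refine ⟨hq0 i, ?_⟩
    calc q i ≤ ∑ k, q k := Finset.single_le_sum (fun k _ => hq0 k) (Finset.mem_univ i)
    _ = 1 := hq1
  -- compactness
  have hclosed : IsClosed (simplex I) := by
    have : simplex I = (⋂ i, {q : Fin I → ℝ | 0 ≤ q i}) ∩ {q | ∑ i, q i = 1} := by
      ext q; simp [simplex, Set.mem_iInter]
    rw [this]
    exact (isClosed_iInter fun i => isClosed_le continuous_const (continuous_apply i)).inter
      (isClosed_eq (by exact continuous_finset_sum _ fun i _ => continuous_apply i)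
        continuous_const)
  have hsub : simplex I ⊆ Set.Icc (0 : Fin I → ℝ) 1 := by
    intro q hq
    exact ⟨fun i => (hcoord q hq i).1, fun i => (hcoord q hq i).2⟩
  have hcompact : IsCompact (simplex I) :=
    IsCompact.of_isClosed_subset isCompact_Icc hclosed hsub
  have hne : (simplex I).Nonempty := by
    refine ⟨fun _ => (I:ℝ)⁻¹, fun i => by positivity, ?_⟩
    have : (I:ℝ) ≠ 0 := Nat.cast_ne_zero.mpr hIpos.ne'
    simp [Finset.sum_const, Finset.card_univ, this]
  -- continuity of G on the simplex
  have hcontG : ContinuousOn G (simplex I) := by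
    apply ContinuousOn.sub
    · exact ((continuous_finset_sum _ fun i _ =>
        (continuous_apply i).mul continuous_const).neg).continuousOn
    · apply continuousOn_finset_sum
      intro i _
      exact (penaltyA_contOn (f i) (hint i)).comp (continuous_apply i).continuousOn
        (fun q hq => hcoord q hq i)
  obtain ⟨qs, hqs, hmax⟩ := hcompact.exists_isMaxOn hne hcontG
  have hmax' : ∀ q ∈ simplex I, G q ≤ G qs := fun q hq => hmax hq
  -- two-coordinate update sum formula
  have key : ∀ (q0 : Fin I → ℝ) (i j : Fin I), i ≠ j → ∀ (a b : ℝ) (F : Fin I → ℝ → ℝ),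
      ∑ k, F k (Function.update (Function.update q0 i a) j b k)
        = ∑ k, F k (q0 k) + (F i a - F i (q0 i)) + (F j b - F j (q0 j)) := by
    intro q0 i j hij a b F
    have hpt : ∀ k, F k (Function.update (Function.update q0 i a) j b k)
        = F k (q0 k) + ((if k = i then F i a - F i (q0 i) else 0)
          + (if k = j then F j b - F j (q0 j) else 0)) := by
      intro k
      by_cases hki : k = i
      · subst hki
        rw [Function.update_of_ne hij, Function.update_self]
        simp [hij]
      · by_cases hkj : k = j
        · subst hkj
          rw [Function.update_self]
          simp [hki]
        · rw [Function.update_of_ne hkj, Function.update_of_ne hki]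
          simp [hki, hkj]
    rw [Finset.sum_congr rfl fun k _ => hpt k, Finset.sum_add_distrib, Finset.sum_add_distrib]
    simp [Finset.sum_ite_eq']
    ring
  -- positivity of the maximizer
  have hpos : ∀ i, 0 < qs i := by
    by_contra hcon
    push_neg at hcon
    obtain ⟨i, hi⟩ := hcon
    have hqi : qs i = 0 := le_antisymm hi (hqs.1 i)
    obtain ⟨j, hj⟩ : ∃ j, 0 < qs j := by
      by_contra h2
      push_neg at h2
      have : ∑ k, qs k ≤ 0 := Finset.sum_nonpos fun k _ => h2 k
      rw [hqs.2] at this; linarith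
    have hij : i ≠ j := by rintro rfl; exact hj.ne' hqi
    have hc1 : qs j ≤ 1 := (hcoord qs hqs j).2
    have hc2 : 0 < qs j / 2 := by linarith
    -- pick a small t
    have hev1 : ∀ᶠ t in nhdsWithin 0 (Set.Ioi 0),
        f i t < x j - x i + f j (qs j / 2) :=
      (hlim i).eventually (Filter.eventually_lt_atBot _)
    have hev2 : ∀ᶠ t in nhdsWithin 0 (Set.Ioi 0), t < qs j / 2 :=
      (eventually_lt_nhds hc2).filter_mono nhdsWithin_le_nhds
    have hev3 : ∀ᶠ t in nhdsWithin 0 (Set.Ioi 0), t ∈ Set.Ioi (0:ℝ) :=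
      eventually_mem_nhdsWithin
    obtain ⟨t, hft, htc, ht0⟩ := (hev1.and (hev2.and hev3)).exists
    have ht0 : 0 < t := ht0
    have ht1 : t ≤ 1 := by linarith
    set q' := Function.update (Function.update qs i t) j (qs j - t) with hq'def
    have hq'mem : q' ∈ simplex I := by
      constructor
      · intro k
        by_cases hki : k = i
        · subst hki
          rw [hq'def, Function.update_of_ne hij, Function.update_self]; linarith
        · by_cases hkj : k = j
          · subst hkj; rw [hq'def, Function.update_self]; linarith
          · rw [hq'def, Function.update_of_ne hkj, Function.update_of_ne hki]
            exact hqs.1 k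
      · have := key qs i j hij t (qs j - t) (fun _ p => p)
        rw [this, hqs.2, hqi]; ring
    -- value comparison
    have hsum1 : ∑ k, q' k * x k = ∑ k, qs k * x k + t * x i - t * x j := by
      have := key qs i j hij t (qs j - t) (fun k p => p * x k)
      rw [hq'def, this, hqi]; ring
    have hsum2 : ∑ k, penaltyA (f k) (q' k)
        = ∑ k, penaltyA (f k) (qs k) + penaltyA (f i) t
          + (penaltyA (f j) (qs j - t) - penaltyA (f j) (qs j)) := by
      have := key qs i j hij t (qs j - t) (fun k p => penaltyA (f k) p)
      rw [hq'def, this, hqi, penaltyA_zero]; ring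
    -- estimates
    have hAi : penaltyA (f i) t ≤ t * f i t := penaltyA_le (f i) (hmono i) (hint i) ht0 ht1
    have hAj : t * f j (qs j / 2) ≤ penaltyA (f j) (qs j) - penaltyA (f j) (qs j - t) := by
      have hsplit : penaltyA (f j) (qs j) - penaltyA (f j) (qs j - t)
          = ∫ s in (qs j - t)..(qs j), f j s := by
        rw [penaltyA, penaltyA]
        rw [intervalIntegral.integral_interval_sub_left
          (hint j (qs j) ⟨by linarith, hc1⟩) (hint j (qs j - t) ⟨by linarith, by linarith⟩)]
      rw [hsplit]
      have := integral_ge_const (f j) (hmono j) (hint j) hc2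
        (by linarith : qs j / 2 ≤ qs j - t) (by linarith : qs j - t ≤ qs j) hc1
      calc t * f j (qs j / 2) = (qs j - (qs j - t)) * f j (qs j / 2) := by ring
      _ ≤ _ := this
    have hGq' : G qs < G q' := by
      have hexp : G q' = G qs - t * x i + t * x j - penaltyA (f i) t
          + (penaltyA (f j) (qs j) - penaltyA (f j) (qs j - t)) := by
        rw [hGdef]; simp only
        rw [hsum1, hsum2]; ring
      have : G qs + t * (x j - x i + f j (qs j / 2) - f i t) ≤ G q' := by
        rw [hexp]
        have h1 : t * f j (qs j / 2) ≤ penaltyA (f j) (qs j) - penaltyA (f j) (qs j - t) := hAj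
        nlinarith [hAi]
      have hpos' : 0 < t * (x j - x i + f j (qs j / 2) - f i t) := by
        apply mul_pos ht0; linarith
      linarith
    exact absurd (hmax' q' hq'mem) (not_le.mpr hGq')
  -- upper bound < 1
  have hlt1 : ∀ i, qs i < 1 := by
    intro i
    obtain ⟨j, hji⟩ : ∃ j : Fin I, j ≠ i :=
      Fintype.exists_ne_of_one_lt_card (by simp; omega) i
    have hsum : qs j + qs i ≤ 1 := by
      have h1 : ∑ k ∈ ({j, i} : Finset (Fin I)), qs k ≤ ∑ k, qs k :=
        Finset.sum_le_sum_of_subset_of_nonneg (Finset.subset_univ _)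
          (fun k _ _ => hqs.1 k)
      rw [Finset.sum_pair hji, hqs.2] at h1
      exact h1
    linarith [hpos j]
  -- strict convexity of each penalty
  have hSC : ∀ i, StrictConvexOn ℝ (Set.Icc (0:ℝ) 1) (penaltyA (f i)) :=
    fun i => penaltyA_strictConvexOn (f i) (hdiff i) (hmono i) (hint i)
  refine ⟨qs, hqs, fun i => ⟨hpos i, hlt1 i⟩, ?_, ?_⟩
  · constructor
    · exact ⟨qs, hqs, rfl⟩
    · rintro v ⟨q, hq, rfl⟩
      exact hmax' q hq
  · -- uniqueness
    intro q hq hGeq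
    by_contra hne'
    obtain ⟨k, hk⟩ := Function.ne_iff.mp hne'
    set mid : Fin I → ℝ := fun i => (q i + qs i) / 2 with hmid
    have hmidmem : mid ∈ simplex I := by
      constructor
      · intro i
        have := hq.1 i; have := hqs.1 i
        rw [hmid]; dsimp only; linarith
      · rw [hmid]
        simp only
        rw [← Finset.sum_div, Finset.sum_add_distrib, hq.2, hqs.2]; norm_num
    have hconv : ∀ i, penaltyA (f i) (mid i)
        ≤ (penaltyA (f i) (q i) + penaltyA (f i) (qs i)) / 2 := by
      intro i
      have h := (hSC i).convexOn.2 (hcoord q hq i) (hcoord qs hqs i)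
        (by norm_num : (0:ℝ) ≤ 1/2) (by norm_num : (0:ℝ) ≤ 1/2) (by norm_num)
      have heq : (1/2 : ℝ) • q i + (1/2 : ℝ) • qs i = mid i := by
        rw [hmid]; dsimp only; push_cast [smul_eq_mul]; ring
      rw [heq] at h
      calc penaltyA (f i) (mid i) ≤ (1/2 : ℝ) • penaltyA (f i) (q i)
          + (1/2 : ℝ) • penaltyA (f i) (qs i) := h
      _ = (penaltyA (f i) (q i) + penaltyA (f i) (qs i)) / 2 := by
        rw [smul_eq_mul, smul_eq_mul]; ring
    have hstrict : penaltyA (f k) (mid k)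
        < (penaltyA (f k) (q k) + penaltyA (f k) (qs k)) / 2 := by
      have h := (hSC k).2 (hcoord q hq k) (hcoord qs hqs k) hk
        (by norm_num : (0:ℝ) < 1/2) (by norm_num : (0:ℝ) < 1/2) (by norm_num)
      have heq : (1/2 : ℝ) • q k + (1/2 : ℝ) • qs k = mid k := by
        rw [hmid]; dsimp only; push_cast [smul_eq_mul]; ring
      rw [heq] at h
      calc penaltyA (f k) (mid k) < (1/2 : ℝ) • penaltyA (f k) (q k)
          + (1/2 : ℝ) • penaltyA (f k) (qs k) := h
      _ = (penaltyA (f k) (q k) + penaltyA (f k) (qs k)) / 2 := by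
        rw [smul_eq_mul, smul_eq_mul]; ring
    have hsumpen : ∑ i, penaltyA (f i) (mid i)
        < ∑ i, (penaltyA (f i) (q i) + penaltyA (f i) (qs i)) / 2 :=
      Finset.sum_lt_sum (fun i _ => hconv i) ⟨k, Finset.mem_univ k, hstrict⟩
    have hsumpen' : ∑ i, (penaltyA (f i) (q i) + penaltyA (f i) (qs i)) / 2
        = (∑ i, penaltyA (f i) (q i) + ∑ i, penaltyA (f i) (qs i)) / 2 := by
      rw [← Finset.sum_div, Finset.sum_add_distrib]
    have hlin : ∑ i, mid i * x i = (∑ i, q i * x i + ∑ i, qs i * x i) / 2 := by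
      have hpt : ∀ i : Fin I, mid i * x i = (q i * x i + qs i * x i) / 2 := by
        intro i; rw [hmid]; dsimp only; ring
      rw [Finset.sum_congr rfl fun i _ => hpt i, ← Finset.sum_div, Finset.sum_add_distrib]
    have hGmid : G qs < G mid := by
      have hGq : G q = G qs := hGeq
      rw [hGdef]; simp only
      rw [hlin]
      have hGq' : -(∑ i, q i * x i) - ∑ i, penaltyA (f i) (q i)
          = -(∑ i, qs i * x i) - ∑ i, penaltyA (f i) (qs i) := hGeq
      nlinarith [hsumpen, hsumpen']
    exact absurd (hmax' mid hmidmem) (not_le.mpr hGmid)
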